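/- Let f ∈ L¹(ℝ) be a measurable function with f(z) = f(−1/z) for almost every z ≠ 0, and let f̃(k) = f(z₊(k)) with z₊(k) = (k + √(k² + 4))/2 (so f̃ ∈ L¹(ℝ)). Then for every y ∈ ℝ, ∫_ℝ f(z) e^{−(i/2)(z − 1/z) y} dz = ∫_ℝ f̃(k) e^{−(i/2) k y} dk. -/

import Mathlib

open MeasureTheory Filter Set
open scoped Topology ENNReal

noncomputable section

/-- `z₊(k) = (k + √(k² + 4))/2`, the positive solution of `z - 1/z = k`. -/
def zplus (k : ℝ) : ℝ := (k + Real.sqrt (k ^ 2 + 4)) / 2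

/-- `z₋(k) = (k - √(k² + 4))/2`, the negative solution of `z - 1/z = k`. -/
def zminus (k : ℝ) : ℝ := (k - Real.sqrt (k ^ 2 + 4)) / 2

lemma sq_s (k : ℝ) : Real.sqrt (k ^ 2 + 4) ^ 2 = k ^ 2 + 4 :=
  Real.sq_sqrt (by positivity)

lemma abs_lt_s (k : ℝ) : |k| < Real.sqrt (k ^ 2 + 4) := by
  have h : Real.sqrt (k ^ 2) < Real.sqrt (k ^ 2 + 4) :=
    Real.sqrt_lt_sqrt (by positivity) (by linarith)
  simpa [Real.sqrt_sq_eq_abs] using h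

lemma zplus_pos (k : ℝ) : 0 < zplus k := by
  have h := abs_lt_s k
  have h2 : -k ≤ |k| := neg_le_abs k
  unfold zplus; linarith

lemma zminus_neg (k : ℝ) : zminus k < 0 := by
  have h := abs_lt_s k
  have h2 : k ≤ |k| := le_abs_self k
  unfold zminus; linarith

lemma zplus_sq (k : ℝ) : zplus k ^ 2 = k * zplus k + 1 := by
  have hs := sq_s k
  unfold zplus; nlinarith

lemma zminus_sq (k : ℝ) : zminus k ^ 2 = k * zminus k + 1 := by
  have hs := sq_s k
  unfold zminus; nlinarith

lemma zplus_spec (k : ℝ) : zplus k - 1 / zplus k = k := by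
  have h := zplus_sq k
  have hp := (zplus_pos k).ne'
  field_simp
  nlinarith

lemma zminus_spec (k : ℝ) : zminus k - 1 / zminus k = k := by
  have h := zminus_sq k
  have hp := (zminus_neg k).ne
  field_simp
  nlinarith

lemma zminus_eq (k : ℝ) : zminus k = -1 / zplus k := by
  have hs := sq_s k
  have hp := (zplus_pos k).ne'
  have hmul : zplus k * zminus k = -1 := by unfold zplus zminus; nlinarith
  field_simp
  linarith [hmul]

lemma zplus_eq_of {z : ℝ} (hz : 0 < z) : zplus (z - 1 / z) = z := by
  set k := z - 1 / z with hk
  have hzne : z ≠ 0 := hz.ne'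
  have hzsq : z ^ 2 = k * z + 1 := by rw [hk]; field_simp; ring
  have hwsq := zplus_sq k
  have hwpos := zplus_pos k
  have hzk : z - k = 1 / z := by rw [hk]; ring
  have hzkpos : 0 < z - k := by rw [hzk]; positivity
  have h1 : (z - zplus k) * (z + zplus k - k) = 0 := by nlinarith
  have h2 : 0 < z + zplus k - k := by linarith
  rcases mul_eq_zero.mp h1 with h | h
  · linarith
  · linarith

lemma zminus_eq_of {z : ℝ} (hz : z < 0) : zminus (z - 1 / z) = z := by
  have hzne : z ≠ 0 := hz.ne
  have hw : 0 < -1 / z := by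
    rw [neg_div]
    exact neg_pos.mpr (by exact div_neg_of_pos_of_neg one_pos hz)
  have hkey : (-1 / z) - 1 / (-1 / z) = z - 1 / z := by
    field_simp
    ring
  have := zplus_eq_of hw
  rw [hkey] at this
  rw [zminus_eq, this]
  field_simp

lemma zplus_inj : Function.Injective zplus := by
  intro a b h
  have := zplus_spec a
  rw [h, zplus_spec b] at this
  exact this.symm

lemma zminus_inj : Function.Injective zminus := by
  intro a b h
  have := zminus_spec a
  rw [h, zminus_spec b] at this
  exact this.symm

lemma zplus_image : zplus '' univ = Ioi 0 := by
  ext z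
  constructor
  · rintro ⟨k, -, rfl⟩; exact zplus_pos k
  · intro hz; exact ⟨z - 1 / z, mem_univ _, zplus_eq_of hz⟩

lemma zminus_image : zminus '' univ = Iio 0 := by
  ext z
  constructor
  · rintro ⟨k, -, rfl⟩; exact zminus_neg k
  · intro hz; exact ⟨z - 1 / z, mem_univ _, zminus_eq_of hz⟩

lemma hasDerivAt_s (k : ℝ) :
    HasDerivAt (fun k : ℝ => Real.sqrt (k ^ 2 + 4)) (k / Real.sqrt (k ^ 2 + 4)) k := by
  have hpos : (0:ℝ) < k ^ 2 + 4 := by positivity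
  have h1 : HasDerivAt (fun k : ℝ => k ^ 2 + 4) (2 * k) k := by
    simpa using ((hasDerivAt_pow 2 k).add_const 4)
  have h2 := (Real.hasDerivAt_sqrt hpos.ne').comp k h1
  have hs : Real.sqrt (k ^ 2 + 4) ≠ 0 := (Real.sqrt_pos.mpr hpos).ne'
  refine h2.congr_deriv ?_
  field_simp

lemma hasDerivAt_zplus (k : ℝ) :
    HasDerivAt zplus ((1 + k / Real.sqrt (k ^ 2 + 4)) / 2) k := by
  have := ((hasDerivAt_id k).add (hasDerivAt_s k)).div_const 2
  exact this

lemma hasDerivAt_zminus (k : ℝ) :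
    HasDerivAt zminus ((1 - k / Real.sqrt (k ^ 2 + 4)) / 2) k := by
  have := ((hasDerivAt_id k).sub (hasDerivAt_s k)).div_const 2
  exact this

lemma deriv_plus_pos (k : ℝ) : 0 < (1 + k / Real.sqrt (k ^ 2 + 4)) / 2 := by
  have h := abs_lt_s k
  have hs : 0 < Real.sqrt (k ^ 2 + 4) := lt_of_le_of_lt (abs_nonneg k) h
  have : -1 < k / Real.sqrt (k ^ 2 + 4) := by
    rw [lt_div_iff₀ hs]
    have := neg_le_abs k
    nlinarith
  linarith

lemma deriv_minus_pos (k : ℝ) : 0 < (1 - k / Real.sqrt (k ^ 2 + 4)) / 2 := by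
  have h := abs_lt_s k
  have hs : 0 < Real.sqrt (k ^ 2 + 4) := lt_of_le_of_lt (abs_nonneg k) h
  have : k / Real.sqrt (k ^ 2 + 4) < 1 := by
    rw [div_lt_iff₀ hs]
    have := le_abs_self k
    nlinarith
  linarith

set_option maxHeartbeats 1000000 in
/-- For `f ∈ L¹(ℝ)` with `f(z) = f(-1/z)` a.e., and every `y ∈ ℝ`,
`∫_ℝ f(z) e^{−(i/2)(z − 1/z)y} dz = ∫_ℝ f(z₊(k)) e^{−(i/2)ky} dk`. -/
theorem symm_oscillatory_change_of_variables (f : ℝ → ℂ) (hf : Integrable f)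
    (hsym : ∀ᵐ z : ℝ, z ≠ 0 → f z = f (-1 / z)) (y : ℝ) :
    (∫ z : ℝ, f z * Complex.exp (-(Complex.I / 2) * ((z : ℂ) - 1 / (z : ℂ)) * (y : ℂ))) =
      ∫ k : ℝ, f (zplus k) * Complex.exp (-(Complex.I / 2) * (k : ℂ) * (y : ℂ)) := by
  set E : ℝ → ℂ := fun z => Complex.exp (-(Complex.I / 2) * ((z : ℂ) - 1 / (z : ℂ)) * (y : ℂ))
    with hE
  -- the oscillatory factor has modulus 1
  have hEcast : ∀ z : ℝ, (-(Complex.I / 2) * ((z : ℂ) - 1 / (z : ℂ)) * (y : ℂ))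
      = ((-(z - 1 / z) * y / 2 : ℝ) : ℂ) * Complex.I := by
    intro z
    push_cast
    ring
  have hEabs : ∀ z : ℝ, ‖E z‖ ≤ 1 := by
    intro z
    rw [hE]
    simp only [hEcast z]
    rw [Complex.norm_exp]
    simp
  have hEmeas : AEStronglyMeasurable E volume := by
    apply Measurable.aestronglyMeasurable
    apply Complex.measurable_exp.comp
    fun_prop
  have hfE : Integrable (fun z => f z * E z) := by
    have h := hf.bdd_mul (c := 1) hEmeas ?_
    · exact h.congr (Eventually.of_forall fun z => mul_comm _ _)
    · exact Eventually.of_forall hEabs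
  -- split the integral
  rw [← intervalIntegral.integral_Iic_add_Ioi (hfE.integrableOn) (hfE.integrableOn),
      integral_Iic_eq_integral_Iio]
  -- E evaluated at zplus / zminus
  have hEplus : ∀ k : ℝ, E (zplus k) = Complex.exp (-(Complex.I / 2) * (k : ℂ) * (y : ℂ)) := by
    intro k
    have h : ((zplus k : ℂ) - 1 / (zplus k : ℂ)) = (k : ℂ) := by
      rw [show ((zplus k : ℂ) - 1 / (zplus k : ℂ)) = ((zplus k - 1 / zplus k : ℝ) : ℂ) by
        push_cast; ring, zplus_spec]
    simp only [hE, h]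
  have hEminus : ∀ k : ℝ, E (zminus k) = Complex.exp (-(Complex.I / 2) * (k : ℂ) * (y : ℂ)) := by
    intro k
    have h : ((zminus k : ℂ) - 1 / (zminus k : ℂ)) = (k : ℂ) := by
      rw [show ((zminus k : ℂ) - 1 / (zminus k : ℂ)) = ((zminus k - 1 / zminus k : ℝ) : ℂ) by
        push_cast; ring, zminus_spec]
    simp only [hE, h]
  set A : ℝ → ℂ := fun k => f (zplus k) * Complex.exp (-(Complex.I / 2) * (k : ℂ) * (y : ℂ))
    with hA
  -- positive part
  have hderivP : ∀ x ∈ (univ : Set ℝ),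
      HasDerivWithinAt zplus ((1 + x / Real.sqrt (x ^ 2 + 4)) / 2) univ x :=
    fun x _ => (hasDerivAt_zplus x).hasDerivWithinAt
  have hderivM : ∀ x ∈ (univ : Set ℝ),
      HasDerivWithinAt zminus ((1 - x / Real.sqrt (x ^ 2 + 4)) / 2) univ x :=
    fun x _ => (hasDerivAt_zminus x).hasDerivWithinAt
  have hinjP : InjOn zplus univ := zplus_inj.injOn
  have hinjM : InjOn zminus univ := zminus_inj.injOn
  have hpos : (∫ z in Ioi (0:ℝ), f z * E z)
      = ∫ k, ((1 + k / Real.sqrt (k ^ 2 + 4)) / 2 : ℝ) • A k := by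
    rw [← zplus_image,
      integral_image_eq_integral_abs_deriv_smul MeasurableSet.univ hderivP hinjP
        (fun z => f z * E z), setIntegral_univ]
    congr 1
    funext k
    rw [abs_of_pos (deriv_plus_pos k), hA, hEplus k]
  have hposInt : Integrable (fun k => ((1 + k / Real.sqrt (k ^ 2 + 4)) / 2 : ℝ) • A k) := by
    have h := (integrableOn_image_iff_integrableOn_abs_deriv_smul MeasurableSet.univ
      hderivP hinjP (fun z => f z * E z)).mp (by rw [zplus_image]; exact hfE.integrableOn)
    rw [integrableOn_univ] at h
    apply h.congr (Eventually.of_forall ?_)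
    intro k
    simp only [abs_of_pos (deriv_plus_pos k), hA, hEplus k]
  -- negative part: first use the symmetry
  have hsymIio : ∀ᵐ z ∂(volume.restrict (Iio (0:ℝ))), f z * E z = f (-1 / z) * E z := by
    rw [ae_restrict_iff' measurableSet_Iio]
    filter_upwards [hsym] with z hz hz0
    rw [← hz hz0.ne]
  have hfEneg : IntegrableOn (fun z => f (-1 / z) * E z) (Iio (0:ℝ)) :=
    (hfE.integrableOn).congr_fun_ae hsymIio
  have hneg : (∫ z in Iio (0:ℝ), f z * E z)
      = ∫ k, ((1 - k / Real.sqrt (k ^ 2 + 4)) / 2 : ℝ) • A k := by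
    rw [integral_congr_ae hsymIio, ← zminus_image,
      integral_image_eq_integral_abs_deriv_smul MeasurableSet.univ hderivM hinjM
        (fun z => f (-1 / z) * E z), setIntegral_univ]
    congr 1
    funext k
    have hz : -1 / zminus k = zplus k := by
      rw [zminus_eq]
      field_simp
    rw [abs_of_pos (deriv_minus_pos k), hA, hEminus k, hz]
  have hnegInt : Integrable (fun k => ((1 - k / Real.sqrt (k ^ 2 + 4)) / 2 : ℝ) • A k) := by
    have h := (integrableOn_image_iff_integrableOn_abs_deriv_smul MeasurableSet.univ
      hderivM hinjM (fun z => f (-1 / z) * E z)).mp (by rw [zminus_image]; exact hfEneg)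
    rw [integrableOn_univ] at h
    apply h.congr (Eventually.of_forall ?_)
    intro k
    have hz : -1 / zminus k = zplus k := by
      rw [zminus_eq]
      field_simp
    simp only [abs_of_pos (deriv_minus_pos k), hA, hEminus k, hz]
  rw [hpos, hneg, ← integral_add hnegInt hposInt]
  congr 1
  funext k
  rw [← add_smul]
  have : ((1 - k / Real.sqrt (k ^ 2 + 4)) / 2 + (1 + k / Real.sqrt (k ^ 2 + 4)) / 2 : ℝ) = 1 := by
    ring
  rw [this, one_smul]
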